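/- The limit E(1) = lim_{n→∞} σ^{q^n}/D_n equals σ itself: any other root ξσ (ξ ∈ 𝔽_q^×, ξ ≠ 1) of z^{q−1} = −x satisfies |ξσ − σ| = q^{−1/(q−1)}, which exceeds the bound sup_{n≥1} |σ^{q^n}/D_n − σ^{q^{n−1}}/D_{n−1}| ≤ q^{−1/(q−1)−(q−1)}; hence E(1) = σ. -/

import Mathlib

private lemma real_pow_inj {a b : ℝ} {n : ℕ} (ha : 0 ≤ a) (hb : 0 ≤ b) (hn : n ≠ 0)
    (h : a ^ n = b ^ n) : a = b := by
  rcases lt_trichotomy a b with h' | h' | h'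
  · exact absurd h (ne_of_lt (pow_lt_pow_left₀ h' ha hn))
  · exact h'
  · exact absurd h.symm (ne_of_lt (pow_lt_pow_left₀ h' hb hn))

/-- `E(1) = lim σ^{q^n}/D_n` equals `σ`: any other root `ξσ`
(`ξ ∈ 𝔽_q^×`, i.e. `ξ^{q-1} = 1`, `ξ ≠ 1`) of `z^{q-1} = -x` satisfies
`|ξσ - σ| = q^{-1/(q-1)}`, which exceeds the bound
`sup_{n ≥ 1} |σ^{q^n}/D_n - σ^{q^{n-1}}/D_{n-1}| ≤ q^{-1/(q-1)-(q-1)}`;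
hence `E(1) = σ`. -/
theorem dwork_carlitz_special_value_is_sigma {C : Type*} [NormedField C] [CompleteSpace C]
    (hna : IsNonarchimedean (‖·‖ : C → ℝ))
    (q : ℕ) (p m : ℕ) (hp : p.Prime) (hm : 0 < m) (hqpm : q = p ^ m) (hq : 1 < q)
    [CharP C p]
    (x : C) (hx : ‖x‖ = (q : ℝ)⁻¹)
    (σ : C) (hσ : σ ^ (q - 1) = -x)
    (D : ℕ → C) (hD0 : D 0 = 1)
    (hD : ∀ n : ℕ, D (n + 1) = (x ^ q ^ (n + 1) - x) * (D n) ^ q)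
    (E1 : C) (hE1 : Filter.Tendsto (fun n : ℕ => σ ^ q ^ n / D n) Filter.atTop (nhds E1)) :
    (∀ ξ : C, ξ ^ (q - 1) = 1 → ξ ≠ 1 →
        ‖ξ * σ - σ‖ = (q : ℝ) ^ (-(1 / ((q : ℝ) - 1)))) ∧
    (∀ n : ℕ, 1 ≤ n →
        ‖σ ^ q ^ n / D n - σ ^ q ^ (n - 1) / D (n - 1)‖ ≤
          (q : ℝ) ^ (-(1 / ((q : ℝ) - 1)) - ((q : ℝ) - 1))) ∧
    E1 = σ := by
  haveI : Fact p.Prime := ⟨hp⟩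
  have hq2 : 2 ≤ q := hq
  have hq0 : (0 : ℝ) < (q : ℝ) := by positivity
  have hq1R : (1 : ℝ) < (q : ℝ) := by exact_mod_cast hq
  have hqi0 : (0 : ℝ) < (q : ℝ)⁻¹ := by positivity
  have hqi1 : (q : ℝ)⁻¹ < 1 := by
    rw [inv_lt_one_iff₀]; right; exact hq1R
  have hqm1 : q - 1 ≠ 0 := by omega
  have hcast : ((q - 1 : ℕ) : ℝ) = (q : ℝ) - 1 := by
    push_cast [Nat.cast_sub hq.le]; ring
  have hqR1 : (q : ℝ) - 1 ≠ 0 := by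
    have : (1:ℝ) < (q:ℝ) := hq1R; linarith
  have hx0 : x ≠ 0 := by
    intro h; rw [h, norm_zero] at hx; exact absurd hx.symm (ne_of_gt hqi0)
  -- norm of σ
  have hσnorm_pow : ‖σ‖ ^ (q - 1) = (q : ℝ)⁻¹ := by
    rw [← norm_pow, hσ, norm_neg, hx]
  have hσval : ‖σ‖ = (q : ℝ) ^ (-(1 / ((q : ℝ) - 1))) := by
    apply real_pow_inj (norm_nonneg σ) (Real.rpow_pos_of_pos hq0 _).le hqm1
    rw [hσnorm_pow, ← Real.rpow_natCast ((q:ℝ) ^ (-(1 / ((q : ℝ) - 1)))) (q-1),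
      ← Real.rpow_mul hq0.le, hcast]
    rw [show -(1 / ((q : ℝ) - 1)) * ((q:ℝ) - 1) = -1 by field_simp]
    rw [Real.rpow_neg_one]
  -- char p frobenius with exponent q
  have hfrob : ∀ a b : C, (a + b) ^ q = a ^ q + b ^ q := by
    intro a b; rw [hqpm]; exact add_pow_char_pow ..
  -- part 1
  have part1 : ∀ ξ : C, ξ ^ (q - 1) = 1 → ξ ≠ 1 →
      ‖ξ * σ - σ‖ = (q : ℝ) ^ (-(1 / ((q : ℝ) - 1))) := by
    intro ξ hξ hξ1
    have hy0 : ξ - 1 ≠ 0 := sub_ne_zero.mpr hξ1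
    have hξq : ξ ^ q = ξ := by
      calc ξ ^ q = ξ ^ (q - 1 + 1) := by rw [Nat.sub_add_cancel hq.le]
      _ = ξ ^ (q-1) * ξ := by rw [pow_succ]
      _ = ξ := by rw [hξ, one_mul]
    have hyq : (ξ - 1) ^ q = ξ - 1 := by
      have h1 : ((1 : C) + (ξ - 1)) ^ q = 1 ^ q + (ξ - 1) ^ q := hfrob 1 (ξ - 1)
      simp only [add_sub_cancel, one_pow, hξq] at h1
      linear_combination -h1
    have hy1 : (ξ - 1) ^ (q - 1) = 1 := by
      have : (ξ - 1) * ((ξ - 1) ^ (q - 1) - 1) = 0 := by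
        have : (ξ - 1) ^ (q - 1) * (ξ - 1) = ξ - 1 := by
          rw [← pow_succ, Nat.sub_add_cancel hq.le]; exact hyq
        linear_combination this
      rcases mul_eq_zero.mp this with h | h
      · exact absurd h hy0
      · linear_combination h
    have hny : ‖ξ - 1‖ = 1 := by
      apply real_pow_inj (norm_nonneg _) zero_le_one hqm1
      rw [← norm_pow, hy1, norm_one, one_pow]
    calc ‖ξ * σ - σ‖ = ‖(ξ - 1) * σ‖ := by ring_nf
      _ = ‖ξ - 1‖ * ‖σ‖ := norm_mul _ _
      _ = ‖σ‖ := by rw [hny, one_mul]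
      _ = _ := hσval
  -- auxiliary sequences
  set e : ℕ → ℕ := fun n => Nat.rec 0 (fun _ ek => q * ek + 1) n with he_def
  set r : ℕ → C := fun n => Nat.rec 1 (fun k rk => (1 - x ^ (q ^ (k+1) - 1)) * rk ^ q) n
    with hr_def
  have he0 : e 0 = 0 := rfl
  have heS : ∀ n, e (n + 1) = q * e n + 1 := fun n => rfl
  have hr0 : r 0 = 1 := rfl
  have hrS : ∀ n, r (n + 1) = (1 - x ^ (q ^ (n+1) - 1)) * r n ^ q := fun n => rfl
  have hsub : ∀ a b : C, ‖a - b‖ ≤ max ‖a‖ ‖b‖ := by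
    intro a b; rw [sub_eq_add_neg]
    simpa using hna a (-b)
  have hσq : σ ^ q = -x * σ := by
    calc σ ^ q = σ ^ (q - 1) * σ := by rw [← pow_succ, Nat.sub_add_cancel hq.le]
    _ = -x * σ := by rw [hσ]
  -- σ^{q^n} = σ * (-x)^{e n}
  have hσpow : ∀ n, σ ^ q ^ n = σ * (-x) ^ e n := by
    intro n; induction n with
    | zero => simp [he0]
    | succ n ih =>
      have h1 : σ ^ q ^ (n+1) = (σ ^ q ^ n) ^ q := by rw [← pow_mul, ← pow_succ]
      rw [h1, ih, mul_pow, hσq, ← pow_mul, mul_comm (e n) q, heS, pow_succ]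
      ring
  -- D n = (-x)^{e n} * r n
  have hxid : ∀ n : ℕ, x ^ q ^ (n+1) - x = -x * (1 - x ^ (q ^ (n+1) - 1)) := by
    intro n
    have h1 : x * x ^ (q ^ (n+1) - 1) = x ^ q ^ (n+1) := by
      rw [← pow_succ']
      congr 1
      have : 1 ≤ q ^ (n+1) := Nat.one_le_pow _ _ (by omega)
      omega
    linear_combination -h1
  have hDr : ∀ n, D n = (-x) ^ e n * r n := by
    intro n; induction n with
    | zero => simp [hD0, he0, hr0]
    | succ n ih =>
      rw [hD n, ih, hxid, hrS, heS, mul_pow, ← pow_mul, mul_comm (e n) q, pow_succ]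
      ring
  -- δ bound
  have hxpow : ∀ k : ℕ, ‖x ^ k‖ = ((q:ℝ)⁻¹) ^ k := by
    intro k; rw [norm_pow, hx]
  have hmono : ∀ a b : ℕ, a ≤ b → ((q:ℝ)⁻¹) ^ b ≤ ((q:ℝ)⁻¹) ^ a := by
    intro a b hab; exact pow_le_pow_of_le_one hqi0.le hqi1.le hab
  have hδ : ∀ n, ‖r (n+1) - 1‖ ≤ ((q:ℝ)⁻¹) ^ (q - 1 + n) := by
    intro n; induction n with
    | zero =>
      rw [hrS, hr0, one_pow, mul_one]
      have : (1 : C) - x ^ (q ^ 1 - 1) - 1 = -(x ^ (q - 1)) := by rw [pow_one]; ring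
      rw [this, norm_neg, hxpow, Nat.add_zero]
    | succ n ih =>
      set δ := r (n+1) - 1 with hδdef
      have hδ1 : ‖δ‖ ≤ 1 := le_trans ih (by
        calc ((q:ℝ)⁻¹) ^ (q - 1 + n) ≤ ((q:ℝ)⁻¹) ^ 0 := hmono 0 _ (Nat.zero_le _)
        _ = 1 := pow_zero _)
      set t := x ^ (q ^ (n+2) - 1) with ht_def
      have hkey : r (n+2) - 1 = δ ^ q - t * (1 + δ ^ q) := by
        rw [hrS (n+1), show r (n+1) = 1 + δ by rw [hδdef]; ring, hfrob 1 δ, one_pow]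
        ring
      have hδq : ‖δ ^ q‖ ≤ ((q:ℝ)⁻¹) ^ (q * (q - 1 + n)) := by
        rw [norm_pow, mul_comm q (q - 1 + n), pow_mul]
        exact pow_le_pow_left₀ (norm_nonneg _) ih q
      have h1δq : ‖(1 : C) + δ ^ q‖ ≤ 1 := by
        have h : ‖(1:C) + δ ^ q‖ ≤ max ‖(1:C)‖ ‖δ ^ q‖ := hna 1 (δ ^ q)
        rw [norm_one, norm_pow] at h
        exact le_trans h (max_le le_rfl (pow_le_one₀ (norm_nonneg _) hδ1))
      have htn : ‖t * (1 + δ ^ q)‖ ≤ ((q:ℝ)⁻¹) ^ (q ^ (n+2) - 1) := by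
        rw [norm_mul, ht_def, hxpow]
        calc _ ≤ ((q:ℝ)⁻¹) ^ (q ^ (n+2) - 1) * 1 :=
              mul_le_mul_of_nonneg_left h1δq (by positivity)
        _ = _ := mul_one _
      have hineq1 : q - 1 + (n + 1) ≤ q * (q - 1 + n) := by
        obtain ⟨a, ha⟩ : ∃ a, q = a + 2 := ⟨q - 2, by omega⟩
        subst ha
        have h1 : a + 2 - 1 = a + 1 := by omega
        rw [h1]
        nlinarith
      have key : q + n + 1 ≤ q ^ (n+2) := by
        calc q + n + 1 ≤ q * (n + 2) := by nlinarith
        _ ≤ q * 2 ^ (n+1) := Nat.mul_le_mul_left _ (by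
              have := @Nat.lt_two_pow_self (n+1); omega)
        _ ≤ q * q ^ (n+1) := Nat.mul_le_mul_left _ (Nat.pow_le_pow_left hq2 _)
        _ = q ^ (n+2) := by ring
      have hineq2 : q - 1 + (n + 1) ≤ q ^ (n+2) - 1 := by
        calc q - 1 + (n + 1) = q + n := by omega
        _ ≤ q ^ (n+2) - 1 := by omega
      rw [hkey]
      refine le_trans (hsub _ _) (max_le ?_ ?_)
      · exact le_trans hδq (hmono _ _ hineq1)
      · exact le_trans htn (hmono _ _ hineq2)
  have hδU : ∀ n, ‖r n - 1‖ ≤ ((q:ℝ)⁻¹) ^ (q - 1) := by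
    intro n; cases n with
    | zero =>
      simp only [hr0, sub_self, norm_zero]
      positivity
    | succ k => exact le_trans (hδ k) (hmono _ _ (Nat.le_add_right _ _))
  have hδn : ∀ n, ‖r n - 1‖ ≤ ((q:ℝ)⁻¹) ^ n := by
    intro n; cases n with
    | zero => simp [hr0]
    | succ k => exact le_trans (hδ k) (hmono _ _ (by omega))
  have hδlt1 : ∀ n, ‖r n - 1‖ < 1 := by
    intro n
    refine lt_of_le_of_lt (hδU n) ?_
    exact pow_lt_one₀ hqi0.le hqi1 hqm1
  have hr1 : ∀ n, ‖r n‖ = 1 := by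
    intro n
    have hle : ‖r n‖ ≤ 1 := by
      have h : ‖(1:C) + (r n - 1)‖ ≤ max ‖(1:C)‖ ‖r n - 1‖ := hna 1 (r n - 1)
      rw [show (1:C) + (r n - 1) = r n by ring, norm_one] at h
      exact le_trans h (max_le le_rfl (hδlt1 n).le)
    have hge : 1 ≤ ‖r n‖ := by
      by_contra hlt
      push_neg at hlt
      have : (1 : ℝ) ≤ max ‖r n‖ ‖r n - 1‖ := by
        have h1 : (1 : C) = r n - (r n - 1) := by ring
        calc (1:ℝ) = ‖(1 : C)‖ := norm_one.symm
        _ = ‖r n - (r n - 1)‖ := by rw [← h1]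
        _ ≤ max ‖r n‖ ‖r n - 1‖ := hsub _ _
      rcases max_cases ‖r n‖ ‖r n - 1‖ with ⟨h, _⟩ | ⟨h, _⟩ <;> rw [h] at this
      · linarith
      · linarith [hδlt1 n]
    linarith
  have hrne : ∀ n, r n ≠ 0 := by
    intro n h
    have := hr1 n
    rw [h, norm_zero] at this
    linarith
  have hxe0 : ∀ n, (-x : C) ^ e n ≠ 0 := fun n => pow_ne_zero _ (neg_ne_zero.mpr hx0)
  -- u n = σ / r n
  have hu : ∀ n, σ ^ q ^ n / D n = σ / r n := by
    intro n
    rw [hσpow, hDr, mul_comm σ ((-x) ^ e n), mul_div_mul_left _ _ (hxe0 n)]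
  -- RHS value
  have hRHS : (q : ℝ) ^ (-(1 / ((q : ℝ) - 1)) - ((q : ℝ) - 1)) =
      ‖σ‖ * ((q:ℝ)⁻¹) ^ (q - 1) := by
    rw [Real.rpow_sub hq0, hσval, div_eq_mul_inv]
    congr 1
    rw [← hcast, Real.rpow_natCast, inv_pow]
  -- part 2
  have part2 : ∀ n : ℕ, 1 ≤ n →
      ‖σ ^ q ^ n / D n - σ ^ q ^ (n - 1) / D (n - 1)‖ ≤
        (q : ℝ) ^ (-(1 / ((q : ℝ) - 1)) - ((q : ℝ) - 1)) := by
    intro n hn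
    rw [hu n, hu (n-1), hRHS]
    have hdiff : σ / r n - σ / r (n-1) = σ * (r (n-1) - r n) / (r n * r (n-1)) := by
      field_simp [hrne n, hrne (n-1)]
    rw [hdiff, norm_div, norm_mul, norm_mul, hr1, hr1, mul_one, div_one]
    refine mul_le_mul_of_nonneg_left ?_ (norm_nonneg σ)
    have : r (n-1) - r n = (r (n-1) - 1) - (r n - 1) := by ring
    rw [this]
    refine le_trans (hsub _ _) (max_le ?_ (hδU n))
    exact hδU (n-1)
  refine ⟨part1, part2, ?_⟩
  -- part 3
  have hconv : ∀ n, ‖σ ^ q ^ n / D n - σ‖ ≤ ‖σ‖ * ((q:ℝ)⁻¹) ^ n := by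
    intro n
    rw [hu n]
    have : σ / r n - σ = σ * (1 - r n) / r n := by
      field_simp [hrne n]
    rw [this, norm_div, norm_mul, hr1, div_one]
    have : ‖(1 : C) - r n‖ = ‖r n - 1‖ := by rw [← norm_neg]; congr 1; ring
    rw [this]
    exact mul_le_mul_of_nonneg_left (hδn n) (norm_nonneg σ)
  have htends : Filter.Tendsto (fun n : ℕ => σ ^ q ^ n / D n) Filter.atTop (nhds σ) := by
    rw [tendsto_iff_norm_sub_tendsto_zero]
    refine squeeze_zero (fun n => norm_nonneg _) hconv ?_
    have : Filter.Tendsto (fun n : ℕ => ((q:ℝ)⁻¹) ^ n) Filter.atTop (nhds 0) :=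
      tendsto_pow_atTop_nhds_zero_of_lt_one hqi0.le hqi1
    simpa using this.const_mul ‖σ‖
  exact tendsto_nhds_unique hE1 htends
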